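/- Let $J \geq 1$ be an integer and $c > 0$. If $Z \sim \mathrm{Gamma}(J, c)$ (density $\frac{c^J}{\Gamma(J)}z^{J-1}e^{-cz}$), then for $\alpha = \beta = 1$, $\int_0^\infty \left(\frac{1+J}{1+z} - c\right)^2 \frac{1}{\Gamma(J)} z^{J-1} e^{-cz} c^J\, dz$ evaluated at $c = 1$ equals $(J+1)^2 + 1 - (J+1)e\,(J^2 + J + 2)E_J(1)$, where $E_J(x) = \int_1^\infty \frac{e^{-xz}}{z^J}dz$ is the generalized exponential integral. -/

import Mathlib

open MeasureTheory Set Filter Real Topology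


/-- Generalized exponential integral `E_J(x) = ∫_1^∞ e^(-x z) / z^J dz`. -/
noncomputable def genExpIntegral (J : ℕ) (x : ℝ) : ℝ :=
  ∫ z in Set.Ioi (1:ℝ), Real.exp (-x * z) / z ^ J

lemma integrableOn_aux (n k : ℕ) :
    IntegrableOn (fun z : ℝ => z ^ n * Real.exp (-z) / (1 + z) ^ k) (Set.Ioi 0) := by
  have hbase : IntegrableOn (fun z : ℝ => z ^ n * Real.exp (-z)) (Set.Ioi 0) := by
    have h := Real.GammaIntegral_convergent (s := (n : ℝ) + 1) (by positivity)
    refine h.congr_fun (fun x hx => ?_) measurableSet_Ioi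
    rw [add_sub_cancel_right]; beta_reduce; rw [Real.rpow_natCast, mul_comm]
  refine MeasureTheory.Integrable.mono hbase ?_ ?_
  · refine ContinuousOn.aestronglyMeasurable ?_ measurableSet_Ioi
    refine ContinuousOn.div (by fun_prop) (by fun_prop) (fun x hx => ?_)
    have : (0:ℝ) < x := hx
    positivity
  · filter_upwards [ae_restrict_mem measurableSet_Ioi] with x hx
    have hx0 : (0:ℝ) < x := hx
    have h1 : (1:ℝ) ≤ (1 + x) ^ k := one_le_pow₀ (by linarith)
    rw [Real.norm_eq_abs, Real.norm_eq_abs, abs_of_nonneg (by positivity),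
      abs_of_nonneg (by positivity)]
    rw [div_le_iff₀ (by positivity)]
    nlinarith [mul_pos (pow_pos hx0 n) (Real.exp_pos (-x))]

/-- `intI n k = ∫_0^∞ z^n e^{-z} / (1+z)^k`. -/
noncomputable def intI (n k : ℕ) : ℝ :=
  ∫ z in Set.Ioi (0:ℝ), z ^ n * Real.exp (-z) / (1 + z) ^ k

lemma intI_zero (n : ℕ) : intI n 0 = n.factorial := by
  have h := Real.Gamma_eq_integral (s := (n : ℝ) + 1) (by positivity)
  have h2 : Real.Gamma ((n : ℝ) + 1) = n.factorial := by
    exact_mod_cast Real.Gamma_nat_eq_factorial n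
  rw [h2] at h
  rw [intI, h]
  refine setIntegral_congr_fun measurableSet_Ioi (fun x hx => ?_)
  rw [add_sub_cancel_right, Real.rpow_natCast, mul_comm, pow_zero, div_one]

lemma intI_A_succ (n : ℕ) : intI (n+1) 1 = n.factorial - intI n 1 := by
  have key : Set.EqOn (fun z : ℝ => z ^ (n+1) * Real.exp (-z) / (1 + z) ^ 1)
      (fun z : ℝ => z ^ n * Real.exp (-z) / (1 + z) ^ 0 - z ^ n * Real.exp (-z) / (1 + z) ^ 1)
      (Set.Ioi 0) := by
    intro z hz
    have hz0 : (0:ℝ) < z := hz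
    have h1 : (1:ℝ) + z ≠ 0 := by positivity
    simp only
    field_simp
    ring
  rw [intI, setIntegral_congr_fun measurableSet_Ioi key,
    integral_sub (integrableOn_aux n 0) (integrableOn_aux n 1)]
  rw [show (∫ z in Set.Ioi (0:ℝ), z ^ n * Real.exp (-z) / (1 + z) ^ 0) = intI n 0 from rfl,
    intI_zero]
  rfl

lemma ftc_C (m : ℕ) : (1/((m:ℝ)+1)) * intI 0 (m+1) + intI 0 (m+2) = 1/((m:ℝ)+1) := by
  set f : ℝ → ℝ := fun z => -Real.exp (-z) / (((m:ℝ)+1) * (1+z)^(m+1)) with hf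
  set f' : ℝ → ℝ := fun z =>
    (1/((m:ℝ)+1)) * (z ^ 0 * Real.exp (-z) / (1+z)^(m+1)) +
      z ^ 0 * Real.exp (-z) / (1+z)^(m+2) with hf'
  have hderiv : ∀ x ∈ Set.Ici (0:ℝ), HasDerivAt f (f' x) x := by
    intro x hx
    have hx0 : (0:ℝ) ≤ x := hx
    have hx1 : (0:ℝ) < 1 + x := by linarith
    have h1 : HasDerivAt (fun z : ℝ => -Real.exp (-z)) (Real.exp (-x)) x := by
      simpa [Function.comp_def, Pi.neg_def] using ((Real.hasDerivAt_exp (-x)).comp x (hasDerivAt_neg x)).neg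
    have h2 : HasDerivAt (fun z : ℝ => ((m:ℝ)+1) * (1+z)^(m+1))
        (((m:ℝ)+1) * (((m:ℝ)+1) * (1+x)^m)) x := by
      have h3 : HasDerivAt (fun z : ℝ => (1+z)^(m+1)) (((m:ℝ)+1) * (1+x)^m * 1) x := by
        have := (hasDerivAt_pow (m+1) (1+x)).comp x ((hasDerivAt_id x).const_add 1)
        simpa [Function.comp_def] using this
      simpa using h3.const_mul ((m:ℝ)+1)
    have hne : ((m:ℝ)+1) * (1+x)^(m+1) ≠ 0 := by positivity
    have := h1.div h2 hne
    refine this.congr_deriv ?_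
    rw [hf']
    field_simp
    ring
  have hint : IntegrableOn f' (Set.Ioi 0) := by
    exact ((integrableOn_aux 0 (m+1)).const_mul _).add (integrableOn_aux 0 (m+2))
  have hten : Tendsto f atTop (𝓝 0) := by
    have hnum : Tendsto (fun z : ℝ => -Real.exp (-z)) atTop (𝓝 0) := by
      simpa using Real.tendsto_exp_neg_atTop_nhds_zero.neg
    have hden : Tendsto (fun z : ℝ => ((m:ℝ)+1) * (1+z)^(m+1)) atTop atTop := by
      refine Tendsto.const_mul_atTop (by positivity) ?_
      exact (tendsto_pow_atTop (Nat.succ_ne_zero m)).comp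
        (tendsto_atTop_add_const_left _ 1 tendsto_id)
    exact hnum.div_atTop hden
  have hFTC := integral_Ioi_of_hasDerivAt_of_tendsto' hderiv hint hten
  have hf0 : f 0 = -(1/((m:ℝ)+1)) := by
    simp [hf]
    ring
  rw [hf0] at hFTC
  rw [MeasureTheory.integral_add ((integrableOn_aux 0 (m+1)).const_mul _)
    (integrableOn_aux 0 (m+2)), integral_const_mul] at hFTC
  rw [intI, intI]
  linarith [hFTC]

lemma intAC (n : ℕ) : intI n 1 = n.factorial * intI 0 (n+1) := by
  induction n with
  | zero => simp [intI]
  | succ n ih =>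
    rw [intI_A_succ, ih]
    have h := ftc_C n
    push_cast [Nat.factorial_succ]
    have hne : ((n:ℝ)+1) ≠ 0 := by positivity
    field_simp at h
    simp only [show n+1+1 = n+2 from rfl]
    linear_combination -(n.factorial : ℝ) * h

lemma ftc_B (n : ℕ) : intI (n+1) 1 + intI (n+1) 2 = ((n:ℝ)+1) * intI n 1 := by
  set f : ℝ → ℝ := fun z => -(z^(n+1) * Real.exp (-z)) / (1+z) with hf
  set f' : ℝ → ℝ := fun z =>
    (-((n:ℝ)+1)) * (z ^ n * Real.exp (-z) / (1+z)^1) +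
      (z ^ (n+1) * Real.exp (-z) / (1+z)^1 + z ^ (n+1) * Real.exp (-z) / (1+z)^2) with hf'
  have hderiv : ∀ x ∈ Set.Ici (0:ℝ), HasDerivAt f (f' x) x := by
    intro x hx
    have hx0 : (0:ℝ) ≤ x := hx
    have hx1 : (0:ℝ) < 1 + x := by linarith
    have hexp : HasDerivAt (fun z : ℝ => Real.exp (-z)) (-Real.exp (-x)) x := by
      simpa [Function.comp_def] using (Real.hasDerivAt_exp (-x)).comp x (hasDerivAt_neg x)
    have hpow : HasDerivAt (fun z : ℝ => z^(n+1)) (((n:ℝ)+1) * x^n) x := by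
      simpa using hasDerivAt_pow (n+1) x
    have hnum : HasDerivAt (fun z : ℝ => -(z^(n+1) * Real.exp (-z)))
        (-(((n:ℝ)+1) * x^n * Real.exp (-x) + x^(n+1) * (-Real.exp (-x)))) x :=
      (hpow.mul hexp).neg
    have hden : HasDerivAt (fun z : ℝ => 1+z) 1 x := (hasDerivAt_id x).const_add 1
    have hne : (1:ℝ) + x ≠ 0 := by positivity
    have := hnum.div hden hne
    refine this.congr_deriv ?_
    rw [hf']
    field_simp
    ring
  have hint : IntegrableOn f' (Set.Ioi 0) := by
    exact ((integrableOn_aux n 1).const_mul _).add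
      ((integrableOn_aux (n+1) 1).add (integrableOn_aux (n+1) 2))
  have hten : Tendsto f atTop (𝓝 0) := by
    have hnum : Tendsto (fun z : ℝ => -(z^(n+1) * Real.exp (-z))) atTop (𝓝 0) := by
      simpa using (tendsto_pow_mul_exp_neg_atTop_nhds_zero (n+1)).neg
    have hden : Tendsto (fun z : ℝ => 1+z) atTop atTop :=
      tendsto_atTop_add_const_left _ 1 tendsto_id
    exact hnum.div_atTop hden
  have hFTC := integral_Ioi_of_hasDerivAt_of_tendsto' hderiv hint hten
  have hf0 : f 0 = 0 := by simp [hf]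
  rw [hf0, sub_zero] at hFTC
  have hcm : IntegrableOn (fun z : ℝ => (-((n:ℝ)+1)) * (z ^ n * Real.exp (-z) / (1+z)^1))
      (Set.Ioi 0) := (integrableOn_aux n 1).const_mul _
  have hadd : IntegrableOn (fun z : ℝ => z ^ (n+1) * Real.exp (-z) / (1+z)^1 +
      z ^ (n+1) * Real.exp (-z) / (1+z)^2) (Set.Ioi 0) :=
    (integrableOn_aux (n+1) 1).add (integrableOn_aux (n+1) 2)
  rw [hf', MeasureTheory.integral_add hcm hadd,
    MeasureTheory.integral_add (integrableOn_aux (n+1) 1) (integrableOn_aux (n+1) 2),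
    integral_const_mul] at hFTC
  have e1 : (∫ z in Set.Ioi (0:ℝ), z ^ n * Real.exp (-z) / (1 + z) ^ 1) = intI n 1 := rfl
  have e2 : (∫ z in Set.Ioi (0:ℝ), z ^ (n+1) * Real.exp (-z) / (1 + z) ^ 1) = intI (n+1) 1 := rfl
  have e3 : (∫ z in Set.Ioi (0:ℝ), z ^ (n+1) * Real.exp (-z) / (1 + z) ^ 2) = intI (n+1) 2 := rfl
  rw [e1, e2, e3] at hFTC
  linarith [hFTC]

lemma intI_B (n : ℕ) : intI n 2 = n.factorial - ((n:ℝ)+1) * intI n 1 := by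
  cases n with
  | zero =>
    have h := ftc_C 0
    norm_num at h ⊢
    linarith [h]
  | succ n =>
    have h1 := ftc_B n
    have h2 := intI_A_succ n
    push_cast [Nat.factorial_succ]
    linear_combination h1 + ((n:ℝ)+1) * h2

lemma genExp_eq (J : ℕ) : genExpIntegral J 1 = Real.exp (-1) * intI 0 J := by
  have hmp := (measurePreserving_add_right (volume : Measure ℝ) 1).setIntegral_preimage_emb
    (measurableEmbedding_addRight 1) (fun z => Real.exp (-1*z)/z^J) (Set.Ioi 1)
  have hpre : (fun x : ℝ => x + 1) ⁻¹' (Set.Ioi 1) = Set.Ioi 0 := by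
    rw [preimage_add_const_Ioi]; norm_num
  rw [hpre] at hmp
  rw [genExpIntegral, ← hmp, intI, ← integral_const_mul]
  refine setIntegral_congr_fun measurableSet_Ioi (fun x hx => ?_)
  have hx0 : (0:ℝ) < x := hx
  simp only [pow_zero, one_mul]
  rw [mul_div_assoc', ← Real.exp_add]
  have h1 : -1 + -1*(x+1) = -x + -1 + -1 := by ring
  have h2 : (1:ℝ) + x = x + 1 := by ring
  rw [h2]
  congr 1
  ring

theorem bayes_risk_at_c_one (J : ℕ) (hJ : 1 ≤ J) :
    (∫ z in Set.Ioi (0:ℝ),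
        ((1 + (J : ℝ)) / (1 + z) - 1) ^ 2 *
          (1 / Real.Gamma J) * z ^ ((J : ℝ) - 1) * Real.exp (-z)) =
      ((J : ℝ) + 1) ^ 2 + 1 -
        ((J : ℝ) + 1) * Real.exp 1 * ((J : ℝ) ^ 2 + (J : ℝ) + 2) * genExpIntegral J 1 := by
  obtain ⟨n, rfl⟩ : ∃ n, J = n + 1 := ⟨J - 1, (Nat.succ_pred_eq_of_pos hJ).symm⟩
  have hF : (n.factorial : ℝ) ≠ 0 := Nat.cast_ne_zero.mpr n.factorial_ne_zero
  have key : Set.EqOn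
      (fun z : ℝ => ((1 + ((n+1 : ℕ) : ℝ)) / (1 + z) - 1) ^ 2 *
        (1 / Real.Gamma ((n+1 : ℕ) : ℝ)) * z ^ (((n+1 : ℕ) : ℝ) - 1) * Real.exp (-z))
      (fun z : ℝ => (((n:ℝ)+2)^2/(n.factorial:ℝ)) * (z ^ n * Real.exp (-z) / (1+z)^2) +
        ((-2*((n:ℝ)+2)/(n.factorial:ℝ)) * (z ^ n * Real.exp (-z) / (1+z)^1) +
         (1/(n.factorial:ℝ)) * (z ^ n * Real.exp (-z) / (1+z)^0))) (Set.Ioi 0) := by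
    intro z hz
    have hz0 : (0:ℝ) < z := hz
    have h1z : (0:ℝ) < 1 + z := by linarith
    have hG : Real.Gamma ((n+1 : ℕ) : ℝ) = (n.factorial : ℝ) := by
      push_cast
      exact_mod_cast Real.Gamma_nat_eq_factorial n
    have hr : z ^ (((n+1 : ℕ) : ℝ) - 1) = z ^ n := by
      push_cast
      rw [add_sub_cancel_right, Real.rpow_natCast]
    simp only
    rw [hG, hr]
    field_simp
    push_cast
    ring
  rw [setIntegral_congr_fun measurableSet_Ioi key]
  have i2 : IntegrableOn (fun z : ℝ => (((n:ℝ)+2)^2/(n.factorial:ℝ)) *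
      (z ^ n * Real.exp (-z) / (1+z)^2)) (Set.Ioi 0) := (integrableOn_aux n 2).const_mul _
  have i1 : IntegrableOn (fun z : ℝ => (-2*((n:ℝ)+2)/(n.factorial:ℝ)) *
      (z ^ n * Real.exp (-z) / (1+z)^1)) (Set.Ioi 0) := (integrableOn_aux n 1).const_mul _
  have i0 : IntegrableOn (fun z : ℝ => (1/(n.factorial:ℝ)) *
      (z ^ n * Real.exp (-z) / (1+z)^0)) (Set.Ioi 0) := (integrableOn_aux n 0).const_mul _
  have i10 : IntegrableOn (fun z : ℝ => (-2*((n:ℝ)+2)/(n.factorial:ℝ)) *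
      (z ^ n * Real.exp (-z) / (1+z)^1) +
      (1/(n.factorial:ℝ)) * (z ^ n * Real.exp (-z) / (1+z)^0)) (Set.Ioi 0) := i1.add i0
  rw [MeasureTheory.integral_add i2 i10, MeasureTheory.integral_add i1 i0,
    integral_const_mul, integral_const_mul, integral_const_mul]
  have e2 : (∫ z in Set.Ioi (0:ℝ), z ^ n * Real.exp (-z) / (1 + z) ^ 2) = intI n 2 := rfl
  have e1 : (∫ z in Set.Ioi (0:ℝ), z ^ n * Real.exp (-z) / (1 + z) ^ 1) = intI n 1 := rfl
  have e0 : (∫ z in Set.Ioi (0:ℝ), z ^ n * Real.exp (-z) / (1 + z) ^ 0) = intI n 0 := rfl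
  rw [e2, e1, e0, intI_B n, intI_zero n, intAC n]
  rw [genExp_eq (n+1), Real.exp_neg]
  push_cast
  have hE : Real.exp 1 ≠ 0 := Real.exp_ne_zero 1
  field_simp
  ring
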